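/- For 1 ≤ k ≤ n, let σ_k denote the polynomial function on n×n real matrices given by the sum of all k×k principal minors. If A is a diagonal matrix with diagonal entries λ = (λ_1,…,λ_n), then the partial derivative of σ_k with respect to the (i,j)-entry evaluated at A equals σ_{k−1}(λ|i) when i = j, and equals 0 when i ≠ j. -/

import Mathlib

open Finset

/-- The `k`-th elementary symmetric function of the entries of `lam` indexed by `s`. -/
noncomputable def esymmOn {n : ℕ} (s : Finset (Fin n)) (k : ℕ) (lam : Fin n → ℝ) : ℝ :=
  ∑ S ∈ s.powersetCard k, ∏ i ∈ S, lam i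

/-- `σ_k(λ)`. -/
noncomputable def esymm {n : ℕ} (k : ℕ) (lam : Fin n → ℝ) : ℝ :=
  esymmOn Finset.univ k lam

/-- `σ_k(λ|i)`: the `k`-th elementary symmetric function with the `i`-th entry deleted. -/
noncomputable def esymmDel {n : ℕ} (i : Fin n) (k : ℕ) (lam : Fin n → ℝ) : ℝ :=
  esymmOn (Finset.univ.erase i) k lam

/-- `σ_k(λ|ij)`: the `k`-th elementary symmetric function with the `i`-th and `j`-th
entries deleted. -/
noncomputable def esymmDel2 {n : ℕ} (i j : Fin n) (k : ℕ) (lam : Fin n → ℝ) : ℝ :=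
  esymmOn ((Finset.univ.erase i).erase j) k lam

/-- The Gårding cone `Γ_k`: all `λ` with `σ_i(λ) > 0` for `1 ≤ i ≤ k`. -/
def GardingCone (n k : ℕ) : Set (Fin n → ℝ) :=
  {lam | ∀ i : ℕ, 1 ≤ i → i ≤ k → 0 < esymm i lam}

/-- `σ_k(A)`: the sum of all `k × k` principal minors of a square matrix `A`,
a polynomial function of the matrix entries. -/
noncomputable def sumPrincipalMinors {n : ℕ} (k : ℕ) (A : Matrix (Fin n) (Fin n) ℝ) : ℝ :=
  ∑ S ∈ (Finset.univ : Finset (Fin n)).powersetCard k,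
    (A.submatrix (fun i : {x // x ∈ S} => (i : Fin n)) (fun i : {x // x ∈ S} => (i : Fin n))).det

theorem det_diag_add_std {m : Type*} [Fintype m] [DecidableEq m] (d : m → ℝ) (i j : m) (t : ℝ) :
    (Matrix.diagonal d + t • Matrix.single i j 1).det
      = (∏ x, d x) + t * (if i = j then ∏ x ∈ Finset.univ.erase i, d x else 0) := by
  by_cases h : i = j
  · subst h
    have he : Matrix.diagonal d + t • Matrix.single i i 1
        = Matrix.diagonal (Function.update d i (d i + t)) := by
      ext p q
      by_cases hp : p = i <;> by_cases hq : q = i <;>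
        simp [Matrix.diagonal, Matrix.single, Function.update, hp, hq,
          Matrix.add_apply] <;>
        first
          | (split_ifs <;> simp_all)
          | (intros; simp_all)
    rw [he, Matrix.det_diagonal, if_pos rfl,
      Finset.prod_update_of_mem (Finset.mem_univ i),
      ← Finset.mul_prod_erase Finset.univ d (Finset.mem_univ i),
      Finset.sdiff_singleton_eq_erase]
    ring
  · have he : Matrix.diagonal d + t • Matrix.single i j 1
        = Matrix.updateRow (Matrix.diagonal d) i
            (Matrix.diagonal d i + t • (Pi.single j 1 : m → ℝ)) := by
      ext p q
      by_cases hp : p = i <;>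
        simp [Matrix.single, Matrix.updateRow, Function.update, hp, Matrix.add_apply,
          Pi.single_apply, eq_comm] <;>
        first
          | (split_ifs <;> simp_all)
          | (intros; simp_all)
    have hz : ((Matrix.diagonal d).updateRow i (t • (Pi.single j 1 : m → ℝ))).det = 0 := by
      apply Matrix.det_eq_zero_of_column_eq_zero i
      intro p
      rcases eq_or_ne p i with hp | hp
      · subst hp; simp [Pi.single_apply, Ne.symm h]
      · simp [Matrix.updateRow_apply, hp, Matrix.diagonal_apply_ne _ hp]
    rw [he, Matrix.det_updateRow_add, Matrix.updateRow_eq_self, hz, Matrix.det_diagonal, if_neg h]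
    ring

theorem det_submatrix_S {n : ℕ} (d : Fin n → ℝ) (i j : Fin n) (t : ℝ) (S : Finset (Fin n)) :
    ((Matrix.diagonal d + t • Matrix.single i j 1).submatrix
        (fun x : {x // x ∈ S} => (x : Fin n)) (fun x : {x // x ∈ S} => (x : Fin n))).det
      = (∏ m ∈ S, d m) + t * (if i = j ∧ i ∈ S then ∏ m ∈ S.erase i, d m else 0) := by
  by_cases hij : i ∈ S ∧ j ∈ S
  · obtain ⟨hi, hj⟩ := hij
    have he : (Matrix.diagonal d + t • Matrix.single i j 1).submatrix
        (fun x : {x // x ∈ S} => (x : Fin n)) (fun x : {x // x ∈ S} => (x : Fin n))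
        = Matrix.diagonal (fun x : {x // x ∈ S} => d x)
            + t • Matrix.single (⟨i, hi⟩ : {x // x ∈ S}) ⟨j, hj⟩ 1 := by
      ext p q
      simp [Matrix.submatrix_apply, Matrix.single, Matrix.diagonal_apply,
        Matrix.add_apply, Subtype.ext_iff, -SetLike.coe_eq_coe]
    rw [he, det_diag_add_std]
    have h1 : (∏ x : {x // x ∈ S}, d x) = ∏ m ∈ S, d m := by
      rw [Finset.univ_eq_attach, Finset.prod_attach]
    have h2 : (∏ x ∈ Finset.univ.erase (⟨i, hi⟩ : {x // x ∈ S}), d x)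
        = ∏ m ∈ S.erase i, d m := by
      rw [Finset.univ_eq_attach, Finset.prod_erase_attach]
    have h3 : ((⟨i, hi⟩ : {x // x ∈ S}) = ⟨j, hj⟩) ↔ (i = j) := Subtype.ext_iff
    rw [h1, h2]
    by_cases h : i = j
    · rw [if_pos (h3.mpr h), if_pos ⟨h, hi⟩]
    · rw [if_neg (fun hh => h (h3.mp hh)), if_neg (fun hh => h hh.1)]
  · have he : (Matrix.diagonal d + t • Matrix.single i j 1).submatrix
        (fun x : {x // x ∈ S} => (x : Fin n)) (fun x : {x // x ∈ S} => (x : Fin n))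
        = Matrix.diagonal (fun x : {x // x ∈ S} => d x) := by
      ext p q
      have : Matrix.single i j t (p : Fin n) (q : Fin n) = 0 := by
        simp only [Matrix.single, Matrix.of_apply]
        rw [if_neg]
        rintro ⟨rfl, rfl⟩
        exact hij ⟨p.2, q.2⟩
      simp [Matrix.submatrix_apply, Matrix.diagonal_apply, Matrix.add_apply, this,
        Subtype.ext_iff, -SetLike.coe_eq_coe]
    rw [he, Matrix.det_diagonal, Finset.univ_eq_attach, Finset.prod_attach, if_neg, mul_zero,
      add_zero]
    rintro ⟨rfl, hiS⟩
    exact hij ⟨hiS, hiS⟩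

theorem deriv_sumPrincipalMinors_diagonal (n k : ℕ) (hk1 : 1 ≤ k) (hkn : k ≤ n)
    (lam : Fin n → ℝ) (i j : Fin n) :
    deriv (fun t : ℝ =>
        sumPrincipalMinors k (Matrix.diagonal lam + t • Matrix.single i j 1)) 0 =
      if i = j then esymmDel i (k - 1) lam else 0 := by
  classical
  set b : ℝ := if i = j then esymmDel i (k - 1) lam else 0 with hb
  have hcoef : (∑ S ∈ (Finset.univ : Finset (Fin n)).powersetCard k,
      if i = j ∧ i ∈ S then ∏ m ∈ S.erase i, lam m else 0) = b := by
    rw [hb]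
    by_cases h : i = j
    · subst h
      simp only [true_and, if_pos rfl]
      rw [Finset.sum_ite, Finset.sum_const_zero, add_zero]
      unfold esymmDel esymmOn
      refine Finset.sum_nbij' (fun S => S.erase i) (fun T => insert i T) ?_ ?_ ?_ ?_ ?_
      · intro S hS
        simp only [Finset.mem_filter, Finset.mem_powersetCard_univ] at hS
        rw [Finset.mem_powersetCard]
        refine ⟨?_, ?_⟩
        · intro x hx
          simp only [Finset.mem_erase] at hx ⊢
          exact ⟨hx.1, Finset.mem_univ x⟩
        · rw [Finset.card_erase_of_mem hS.2, hS.1]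
      · intro T hT
        rw [Finset.mem_powersetCard] at hT
        have hiT : i ∉ T := fun hh => (Finset.mem_erase.mp (hT.1 hh)).1 rfl
        simp only [Finset.mem_filter, Finset.mem_powersetCard_univ]
        constructor
        · rw [Finset.card_insert_of_notMem hiT, hT.2, Nat.sub_add_cancel hk1]
        · exact Finset.mem_insert_self i T
      · intro S hS
        simp only [Finset.mem_filter] at hS
        exact Finset.insert_erase hS.2
      · intro T hT
        rw [Finset.mem_powersetCard] at hT
        have hiT : i ∉ T := fun hh => (Finset.mem_erase.mp (hT.1 hh)).1 rfl
        exact Finset.erase_insert hiT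
      · intro S hS
        rfl
    · simp [h]
  have hfun : (fun t : ℝ =>
      sumPrincipalMinors k (Matrix.diagonal lam + t • Matrix.single i j 1))
      = fun t : ℝ => esymm k lam + t * b := by
    funext t
    unfold sumPrincipalMinors
    rw [Finset.sum_congr rfl (fun S _ => det_submatrix_S lam i j t S), Finset.sum_add_distrib,
      ← Finset.mul_sum, hcoef]
    rfl
  rw [hfun]
  have hd : HasDerivAt (fun t : ℝ => esymm k lam + t * b) b 0 := by
    simpa using ((hasDerivAt_id (0 : ℝ)).mul_const b).const_add (esymm k lam)
  rw [hd.deriv]
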